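/- Let μ > 0 and let p ∈ V_μ. Then ∑_{n≥0} |n − μ| p_n ≤ 2√2 · √μ · √(μ − (∑_{n≥0} √n · p_n)²); equivalently, if X is a random variable with law p, then E|X − μ| ≤ 2√2 · √μ · √(Var[√X]). -/
import Mathlib


/-- Cumulative distribution function of a pmf on ℕ: `F n = ∑_{m ≤ n} p m`. -/
noncomputable def cdf (p : ℕ → ℝ) (n : ℕ) : ℝ := ∑ m ∈ Finset.range (n + 1), p m

/-- Wasserstein-1 distance between two pmfs on ℕ, `W1(p,q) = ∑_{n ≥ 0} |F_n - H_n|`. -/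
noncomputable def W1 (p q : ℕ → ℝ) : ℝ := ∑' n : ℕ, |cdf p n - cdf q n|

/-- Gini index of a pmf on ℕ with mean μ: `G[p] = (1/(2μ)) ∑_i ∑_j |i-j| p_i p_j`. -/
noncomputable def Gini (μ : ℝ) (p : ℕ → ℝ) : ℝ :=
  (1 / (2 * μ)) * ∑' i : ℕ, ∑' j : ℕ, |(i : ℝ) - (j : ℝ)| * p i * p j

/-- The shifted Bernoulli distribution with mean μ:
`p*_{⌊μ⌋} = 1 - μ + ⌊μ⌋`, `p*_{⌊μ⌋+1} = μ - ⌊μ⌋`, `p*_n = 0` otherwise. -/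
noncomputable def pstar (μ : ℝ) : ℕ → ℝ := fun n =>
  if n = ⌊μ⌋₊ then 1 - μ + (⌊μ⌋₊ : ℝ)
  else if n = ⌊μ⌋₊ + 1 then μ - (⌊μ⌋₊ : ℝ)
  else 0

/-- The Dirac distribution on ℕ concentrated at `k`. -/
noncomputable def dirac (k : ℕ) : ℕ → ℝ := fun n => if n = k then 1 else 0

theorem stmt_5 (μ : ℝ) (hμ : 0 < μ) (p : ℕ → ℝ)
    (hpos : ∀ n, 0 ≤ p n) (hsum : HasSum p 1)
    (hmean : HasSum (fun n : ℕ => (n : ℝ) * p n) μ) :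
    (∑' n : ℕ, |(n : ℝ) - μ| * p n) ≤
      2 * Real.sqrt 2 * Real.sqrt μ *
        Real.sqrt (μ - (∑' n : ℕ, Real.sqrt n * p n) ^ 2) := by
  have hp : Summable p := hsum.summable
  have hnp : Summable (fun n : ℕ => (n : ℝ) * p n) := hmean.summable
  have hμ' := hμ.le
  have hsqμ : Real.sqrt μ * Real.sqrt μ = μ := Real.mul_self_sqrt hμ'
  have hsqn : ∀ n : ℕ, Real.sqrt n * Real.sqrt n = (n : ℝ) := fun n =>
    Real.mul_self_sqrt (Nat.cast_nonneg n)
  have hsS : Summable (fun n : ℕ => Real.sqrt n * p n) := by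
    apply Summable.of_nonneg_of_le (fun n => mul_nonneg (Real.sqrt_nonneg _) (hpos n))
      (fun n => ?_) (hp.add hnp)
    have h1 : Real.sqrt n ≤ 1 + (n : ℝ) := by
      nlinarith [hsqn n, Real.sqrt_nonneg (n : ℝ), (Nat.cast_nonneg n : (0:ℝ) ≤ n)]
    calc Real.sqrt n * p n ≤ (1 + (n : ℝ)) * p n := mul_le_mul_of_nonneg_right h1 (hpos n)
      _ = p n + (n : ℝ) * p n := by ring
  set s := ∑' n : ℕ, Real.sqrt n * p n with hs_def
  have hS : HasSum (fun n : ℕ => Real.sqrt n * p n) s := hsS.hasSum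
  have hs0 : 0 ≤ s := tsum_nonneg fun n => mul_nonneg (Real.sqrt_nonneg _) (hpos n)
  have hA : HasSum (fun n : ℕ => (Real.sqrt n - Real.sqrt μ) ^ 2 * p n)
      (2 * μ - 2 * Real.sqrt μ * s) := by
    have h := hmean.add ((hS.mul_left (-(2 * Real.sqrt μ))).add (hsum.mul_left μ))
    have hval : μ + (-(2 * Real.sqrt μ) * s + μ * 1) = 2 * μ - 2 * Real.sqrt μ * s := by ring
    rw [hval] at h
    have key : ∀ n : ℕ, (n : ℝ) * p n + (-(2 * Real.sqrt μ) * (Real.sqrt n * p n) + μ * p n)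
        = (Real.sqrt n - Real.sqrt μ) ^ 2 * p n := by
      intro n
      have h2 : (Real.sqrt n - Real.sqrt μ) ^ 2
          = (n : ℝ) - 2 * Real.sqrt μ * Real.sqrt n + μ := by
        have := hsqn n; nlinarith [hsqμ]
      rw [h2]; ring
    exact (funext key) ▸ h
  have hB : HasSum (fun n : ℕ => (Real.sqrt n + Real.sqrt μ) ^ 2 * p n)
      (2 * μ + 2 * Real.sqrt μ * s) := by
    have h := hmean.add ((hS.mul_left (2 * Real.sqrt μ)).add (hsum.mul_left μ))
    have hval : μ + ((2 * Real.sqrt μ) * s + μ * 1) = 2 * μ + 2 * Real.sqrt μ * s := by ring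
    rw [hval] at h
    have key : ∀ n : ℕ, (n : ℝ) * p n + ((2 * Real.sqrt μ) * (Real.sqrt n * p n) + μ * p n)
        = (Real.sqrt n + Real.sqrt μ) ^ 2 * p n := by
      intro n
      have h2 : (Real.sqrt n + Real.sqrt μ) ^ 2
          = (n : ℝ) + 2 * Real.sqrt μ * Real.sqrt n + μ := by
        have := hsqn n; nlinarith [hsqμ]
      rw [h2]; ring
    exact (funext key) ▸ h
  have hA0 : 0 ≤ 2 * μ - 2 * Real.sqrt μ * s :=
    hasSum_le (fun n => mul_nonneg (sq_nonneg _) (hpos n)) hasSum_zero hA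
  have hsqμpos : 0 < Real.sqrt μ := Real.sqrt_pos.2 hμ
  have hsle : s ≤ Real.sqrt μ := by nlinarith
  have hvar0 : 0 ≤ μ - s ^ 2 := by nlinarith
  have habs : Summable (fun n : ℕ => |(n : ℝ) - μ| * p n) := by
    apply Summable.of_nonneg_of_le (fun n => mul_nonneg (abs_nonneg _) (hpos n))
      (fun n => ?_) (hnp.add (hp.mul_left μ))
    have h1 : |(n : ℝ) - μ| ≤ (n : ℝ) + μ := by
      rw [abs_sub_le_iff]; constructor <;> nlinarith [(Nat.cast_nonneg n : (0:ℝ) ≤ n)]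
    calc |(n : ℝ) - μ| * p n ≤ ((n : ℝ) + μ) * p n := mul_le_mul_of_nonneg_right h1 (hpos n)
      _ = (n : ℝ) * p n + μ * p n := by ring
  have main : (∑' n : ℕ, |(n : ℝ) - μ| * p n) ≤
      Real.sqrt (2 * μ - 2 * Real.sqrt μ * s) * Real.sqrt (2 * μ + 2 * Real.sqrt μ * s) := by
    refine Summable.tsum_le_of_sum_le habs fun F => ?_
    have step1 : ∀ n ∈ F, |(n : ℝ) - μ| * p n =
        (|Real.sqrt n - Real.sqrt μ| * Real.sqrt (p n)) *
          ((Real.sqrt n + Real.sqrt μ) * Real.sqrt (p n)) := by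
      intro n _
      have hpn : Real.sqrt (p n) * Real.sqrt (p n) = p n := Real.mul_self_sqrt (hpos n)
      have h1 : (n : ℝ) - μ = (Real.sqrt n - Real.sqrt μ) * (Real.sqrt n + Real.sqrt μ) := by
        have := hsqn n; nlinarith [hsqμ]
      rw [h1, abs_mul, abs_of_nonneg (add_nonneg (Real.sqrt_nonneg _) (Real.sqrt_nonneg _)),
]
      linear_combination -|Real.sqrt n - Real.sqrt μ| * (Real.sqrt n + Real.sqrt μ) * hpn
    rw [Finset.sum_congr rfl step1]
    refine le_trans (Real.sum_mul_le_sqrt_mul_sqrt F _ _) ?_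
    have e1 : ∀ n ∈ F, (|Real.sqrt n - Real.sqrt μ| * Real.sqrt (p n)) ^ 2
        = (Real.sqrt n - Real.sqrt μ) ^ 2 * p n := by
      intro n _
      rw [mul_pow, sq_abs, Real.sq_sqrt (hpos n)]
    have e2 : ∀ n ∈ F, ((Real.sqrt n + Real.sqrt μ) * Real.sqrt (p n)) ^ 2
        = (Real.sqrt n + Real.sqrt μ) ^ 2 * p n := by
      intro n _
      rw [mul_pow, Real.sq_sqrt (hpos n)]
    rw [Finset.sum_congr rfl e1, Finset.sum_congr rfl e2]
    have b1 : ∑ n ∈ F, (Real.sqrt n - Real.sqrt μ) ^ 2 * p n ≤ 2 * μ - 2 * Real.sqrt μ * s := by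
      rw [← hA.tsum_eq]
      exact Summable.sum_le_tsum F (fun n _ => mul_nonneg (sq_nonneg _) (hpos n)) hA.summable
    have b2 : ∑ n ∈ F, (Real.sqrt n + Real.sqrt μ) ^ 2 * p n ≤ 2 * μ + 2 * Real.sqrt μ * s := by
      rw [← hB.tsum_eq]
      exact Summable.sum_le_tsum F (fun n _ => mul_nonneg (sq_nonneg _) (hpos n)) hB.summable
    exact mul_le_mul (Real.sqrt_le_sqrt b1) (Real.sqrt_le_sqrt b2)
      (Real.sqrt_nonneg _) (Real.sqrt_nonneg _)
  refine main.trans ?_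
  have c1 : Real.sqrt (2 * μ - 2 * Real.sqrt μ * s) ≤ Real.sqrt (2 * (μ - s ^ 2)) := by
    apply Real.sqrt_le_sqrt; nlinarith
  have c2 : Real.sqrt (2 * μ + 2 * Real.sqrt μ * s) ≤ Real.sqrt (4 * μ) := by
    apply Real.sqrt_le_sqrt; nlinarith
  have e3 : Real.sqrt (2 * (μ - s ^ 2)) = Real.sqrt 2 * Real.sqrt (μ - s ^ 2) :=
    Real.sqrt_mul (by norm_num) _
  have e4 : Real.sqrt (4 * μ) = 2 * Real.sqrt μ := by
    rw [show (4 : ℝ) * μ = 2 ^ 2 * μ by norm_num, Real.sqrt_mul (by positivity),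
      Real.sqrt_sq (by norm_num : (0:ℝ) ≤ 2)]
  calc Real.sqrt (2 * μ - 2 * Real.sqrt μ * s) * Real.sqrt (2 * μ + 2 * Real.sqrt μ * s)
      ≤ (Real.sqrt 2 * Real.sqrt (μ - s ^ 2)) * (2 * Real.sqrt μ) := by
        exact mul_le_mul (c1.trans_eq e3) (c2.trans_eq e4)
          (Real.sqrt_nonneg _) (by positivity)
    _ = 2 * Real.sqrt 2 * Real.sqrt μ * Real.sqrt (μ - s ^ 2) := by ring
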